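/- Let G₁ = (T₁, A₁) and G₂ = (T₂, A₂) be games that are both injective with respect to finite-game embeddings, with T₁, T₂, A₁ and A₂ at most countable. If G ≤ G₁ is a finite game and f : G → G₂ is a game embedding, then f extends to an isomorphism of games f̃ : G₁ → G₂. -/

import Mathlib

universe u v w x y

namespace FraisseGames

/-- The initial segment (of length `n`) of an infinite sequence `R`. -/
def runPrefix {M : Type u} (R : ℕ → M) (n : ℕ) : List M :=
  (List.range n).map R

/-- `T` is a game tree over `M`: it is closed under initial segments, and every
moment of `T` has a one-step extension in `T`. -/
def IsGameTree {M : Type u} (T : Set (List M)) : Prop :=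
  (∀ t ∈ T, ∀ k : ℕ, t.take k ∈ T) ∧ ∀ t ∈ T, ∃ x : M, t ++ [x] ∈ T

/-- The set of runs of the tree `T`. -/
def Runs {M : Type u} (T : Set (List M)) : Set (ℕ → M) :=
  {R | ∀ n : ℕ, runPrefix R n ∈ T}

/-- A game over `M`: a game tree together with a payoff set of runs. -/
structure Game (M : Type u) : Type u where
  tree : Set (List M)
  isGameTree : IsGameTree tree
  payoff : Set (ℕ → M)
  payoff_subset : payoff ⊆ Runs tree

/-- A game is finite if its set of runs is finite. -/
def Game.IsFin {M : Type u} (G : Game M) : Prop := (Runs G.tree).Finite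

/-- The subgame relation `G ≤ G'`. -/
def Game.Sub {M : Type u} (G G' : Game M) : Prop :=
  G.tree ⊆ G'.tree ∧ G.payoff = G'.payoff ∩ Runs G.tree

/-- `f` is a chronological map from `T₁` to `T₂`: it maps `T₁` into `T₂` and it
preserves lengths and truncations of moments. -/
def Chronological {M₁ : Type u} {M₂ : Type v} (T₁ : Set (List M₁)) (T₂ : Set (List M₂))
    (f : List M₁ → List M₂) : Prop :=
  (∀ t ∈ T₁, f t ∈ T₂) ∧ (∀ t ∈ T₁, (f t).length = t.length) ∧
    ∀ t ∈ T₁, ∀ k : ℕ, f (t.take k) = (f t).take k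

/-- `BarMapsTo f R S` says that the map `f̄` on runs induced by the chronological
map `f` sends the run `R` to the run `S`, i.e. `S↾n = f (R↾n)` for all `n`. -/
def BarMapsTo {M₁ : Type u} {M₂ : Type v} (f : List M₁ → List M₂)
    (R : ℕ → M₁) (S : ℕ → M₂) : Prop :=
  ∀ n : ℕ, runPrefix S n = f (runPrefix R n)

/-- `f` is an A-morphism from `G₁` to `G₂`: a chronological map whose induced map on
runs sends runs won by Ali to runs won by Ali. -/
def IsAMorphism {M₁ : Type u} {M₂ : Type v} (G₁ : Game M₁) (G₂ : Game M₂)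
    (f : List M₁ → List M₂) : Prop :=
  Chronological G₁.tree G₂.tree f ∧
    ∀ R ∈ G₁.payoff, ∀ S : ℕ → M₂, BarMapsTo f R S → S ∈ G₂.payoff

/-- `f` is a game embedding from `G₁` to `G₂`: a chronological map, injective on the
tree, such that for every run `R` of `G₁`, `R ∈ A₁ ↔ f̄ R ∈ A₂`. -/
def IsGameEmbedding {M₁ : Type u} {M₂ : Type v} (G₁ : Game M₁) (G₂ : Game M₂)
    (f : List M₁ → List M₂) : Prop :=
  Chronological G₁.tree G₂.tree f ∧
    (∀ t ∈ G₁.tree, ∀ s ∈ G₁.tree, f t = f s → t = s) ∧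
    ∀ R ∈ Runs G₁.tree, ∀ S : ℕ → M₂, BarMapsTo f R S → (R ∈ G₁.payoff ↔ S ∈ G₂.payoff)

/-- `f` is an isomorphism of games from `G₁` onto `G₂`: a game embedding that is
surjective onto the tree of `G₂`. -/
def IsGameIso {M₁ : Type u} {M₂ : Type v} (G₁ : Game M₁) (G₂ : Game M₂)
    (f : List M₁ → List M₂) : Prop :=
  IsGameEmbedding G₁ G₂ f ∧ ∀ s ∈ G₂.tree, ∃ t ∈ G₁.tree, f t = s

/-- The set of eventually-zero infinite sequences of natural numbers. -/
def c00 : Set (ℕ → ℕ) := {R | ∃ N : ℕ, ∀ n ≥ N, R n = 0}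

/-- The game `G_FL = (ω^{<ω}, c₀₀)`. -/
def GFL : Game ℕ where
  tree := Set.univ
  isGameTree := ⟨fun _ _ _ => trivial, fun _ _ => ⟨0, trivial⟩⟩
  payoff := c00
  payoff_subset := fun _ _ _ => trivial

/-- A game `G` is injective with respect to game embeddings between finite games. -/
def InjWrtFinGameEmb.{u', v', w'} {N : Type w'} (G : Game N) : Prop :=
  ∀ (M : Type u') (M' : Type v') (H : Game M) (H' : Game M'),
    H.IsFin → H'.IsFin →
    ∀ e : List M → List M', IsGameEmbedding H H' e →
    ∀ f : List M → List N, IsGameEmbedding H G f →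
      ∃ g : List M' → List N, IsGameEmbedding H' G g ∧ ∀ t ∈ H.tree, g (e t) = f t

universe u' v'

section Auxiliary

variable {M : Type u} {M₁ : Type u} {M₂ : Type v} {M₃ : Type w}

theorem runPrefix_length (R : ℕ → M) (n : ℕ) : (runPrefix R n).length = n := by
  simp [runPrefix]

theorem runPrefix_take (R : ℕ → M) (n k : ℕ) :
    (runPrefix R n).take k = runPrefix R (min k n) := by
  simp [runPrefix, ← List.map_take, List.take_range]

theorem runPrefix_take_of_le (R : ℕ → M) {n k : ℕ} (h : k ≤ n) :
    (runPrefix R n).take k = runPrefix R k := by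
  rw [runPrefix_take, min_eq_left h]

theorem runPrefix_succ (R : ℕ → M) (n : ℕ) :
    runPrefix R (n + 1) = runPrefix R n ++ [R n] := by
  simp [runPrefix, List.range_succ]

theorem runPrefix_getElem (R : ℕ → M) {n i : ℕ} (h : i < n) :
    (runPrefix R n)[i]'(by simp [runPrefix_length, h]) = R i := by
  simp [runPrefix]

theorem runPrefix_inj {R R' : ℕ → M} (h : ∀ n, runPrefix R n = runPrefix R' n) :
    R = R' := by
  funext n
  have := h (n + 1)
  have h1 : (runPrefix R (n+1))[n]'(by simp [runPrefix_length]) =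
      (runPrefix R' (n+1))[n]'(by simp [runPrefix_length]) := by
    congr 1
  rwa [runPrefix_getElem R (Nat.lt_succ_self n), runPrefix_getElem R' (Nat.lt_succ_self n)] at h1

theorem runPrefix_map (φ : M₁ → M₂) (R : ℕ → M₁) (n : ℕ) :
    runPrefix (fun k => φ (R k)) n = (runPrefix R n).map φ := by
  simp [runPrefix]

theorem runs_mem_prefix {T : Set (List M)} {R : ℕ → M} (h : R ∈ Runs T) (n : ℕ) :
    runPrefix R n ∈ T := h n

theorem barMapsTo_unique {f : List M₁ → List M₂} {R : ℕ → M₁} {S S' : ℕ → M₂}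
    (h : BarMapsTo f R S) (h' : BarMapsTo f R S') : S = S' :=
  runPrefix_inj (fun n => (h n).trans (h' n).symm)

theorem barMapsTo_runs {T₁ : Set (List M₁)} {T₂ : Set (List M₂)} {f : List M₁ → List M₂}
    (hc : Chronological T₁ T₂ f) {R : ℕ → M₁} (hR : R ∈ Runs T₁) {S : ℕ → M₂}
    (h : BarMapsTo f R S) : S ∈ Runs T₂ := by
  intro n
  rw [h n]
  exact hc.1 _ (hR n)

theorem barMapsTo_comp {M₃ : Type w} {f : List M₁ → List M₂} {g : List M₂ → List M₃}
    {R : ℕ → M₁} {S : ℕ → M₂} {U : ℕ → M₃}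
    (h1 : BarMapsTo f R S) (h2 : BarMapsTo g S U) : BarMapsTo (fun t => g (f t)) R U := by
  intro n
  rw [h2 n, h1 n]

/-- The canonical choice of `f̄ R`, given a junk element. -/
noncomputable def barRun (j : M₂) (f : List M₁ → List M₂) (R : ℕ → M₁) : ℕ → M₂ :=
  fun n => (f (runPrefix R (n + 1))).getD n j

theorem barMapsTo_barRun {T₁ : Set (List M₁)} {T₂ : Set (List M₂)} {f : List M₁ → List M₂}
    (hc : Chronological T₁ T₂ f) {R : ℕ → M₁} (hR : R ∈ Runs T₁) (j : M₂) :
    BarMapsTo f R (barRun j f R) := by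
  intro n
  have hlen : (f (runPrefix R n)).length = n := by
    rw [hc.2.1 _ (hR n), runPrefix_length]
  apply List.ext_getElem
  · rw [runPrefix_length, hlen]
  intro i h1 h2
  rw [runPrefix_length] at h1
  have key : f (runPrefix R (i + 1)) = (f (runPrefix R n)).take (i + 1) := by
    rw [← hc.2.2 _ (hR n) (i + 1), runPrefix_take_of_le R h1]
  have hilt : i < (f (runPrefix R (i+1))).length := by
    rw [hc.2.1 _ (hR (i+1)), runPrefix_length]; omega
  rw [runPrefix_getElem _ h1]
  show (f (runPrefix R (i + 1))).getD i j = _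
  rw [List.getD_eq_getElem _ _ hilt]
  have : (f (runPrefix R (i+1)))[i]'hilt = ((f (runPrefix R n)).take (i+1))[i]'(by
      rw [← key]; exact hilt) := by
    congr 1
  rw [this]
  simp

/-- Every moment of a game tree extends to a run. -/
theorem exists_run {T : Set (List M)} (hT : IsGameTree T) {t : List M} (ht : t ∈ T) :
    ∃ R ∈ Runs T, runPrefix R t.length = t := by
  obtain ⟨hpre, hext⟩ := hT
  choose φ hφ using hext
  -- junk element
  set x0 := φ t ht with hx0
  -- the chain
  let u : ℕ → {l : List M // l ∈ T} := fun n =>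
    Nat.rec ⟨t, ht⟩ (fun _ p => ⟨p.1 ++ [φ p.1 p.2], hφ p.1 p.2⟩) n
  have hu0 : (u 0).1 = t := rfl
  have hustep : ∀ n, (u (n + 1)).1 = (u n).1 ++ [φ (u n).1 (u n).2] := fun n => rfl
  have hulen : ∀ n, (u n).1.length = t.length + n := by
    intro n
    induction n with
    | zero => simp [hu0]
    | succ n ih => rw [hustep, List.length_append, ih]; simp; omega
  have hcoh : ∀ k n, k ≤ n → (u n).1.take (t.length + k) = (u k).1 := by
    intro k n hkn
    induction n with
    | zero =>
      have : k = 0 := Nat.le_zero.mp hkn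
      subst this; rw [← hulen 0]; exact List.take_length
    | succ n ih =>
      rcases Nat.lt_or_ge k (n + 1) with h | h
      · have hk : k ≤ n := Nat.lt_succ_iff.mp h
        rw [hustep, List.take_append_of_le_length (by rw [hulen]; omega)]
        exact ih hk
      · have : k = n + 1 := le_antisymm hkn h
        subst this; rw [← hulen (n+1)]; exact List.take_length
  set R : ℕ → M := fun k => (u (k + 1)).1.getD k x0 with hR
  have hkey : ∀ n, runPrefix R n = (u n).1.take n := by
    intro n
    apply List.ext_getElem
    · rw [runPrefix_length, List.length_take, hulen]; omega
    intro i h1 h2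
    rw [runPrefix_length] at h1
    rw [runPrefix_getElem _ h1]
    have hi1 : i < (u (i+1)).1.length := by have := hulen (i+1); omega
    show (u (i + 1)).1.getD i x0 = _
    rw [List.getD_eq_getElem _ _ hi1]
    have hc : (u n).1.take (t.length + (i + 1)) = (u (i+1)).1 := hcoh (i+1) n (by omega)
    have : ((u n).1.take (t.length + (i + 1)))[i]'(by rw [hc]; exact hi1) =
        (u (i+1)).1[i]'hi1 := by congr 1
    rw [← this]
    simp [List.getElem_take]
  refine ⟨R, ?_, ?_⟩
  · intro n
    rw [hkey n]
    exact hpre _ (u n).2 n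
  · rw [hkey t.length]
    have := hcoh 0 t.length (Nat.zero_le _)
    simpa [hu0] using this

/-- The set of initial segments of runs in `S`. -/
def pref (S : Set (ℕ → M)) : Set (List M) :=
  {t | ∃ R ∈ S, runPrefix R t.length = t}

theorem runPrefix_mem_pref {S : Set (ℕ → M)} {R : ℕ → M} (hR : R ∈ S) (n : ℕ) :
    runPrefix R n ∈ pref S :=
  ⟨R, hR, by rw [runPrefix_length]⟩

theorem pref_mono {S S' : Set (ℕ → M)} (h : S ⊆ S') : pref S ⊆ pref S' := by
  rintro t ⟨R, hR, ht⟩; exact ⟨R, h hR, ht⟩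

theorem pref_isGameTree (S : Set (ℕ → M)) : IsGameTree (pref S) := by
  constructor
  · rintro t ⟨R, hR, ht⟩ k
    refine ⟨R, hR, ?_⟩
    have h2 : t.take k = runPrefix R (min k t.length) := by
      conv_lhs => rw [← ht]
      exact runPrefix_take R t.length k
    rw [h2, runPrefix_length]
  · rintro t ⟨R, hR, ht⟩
    refine ⟨R t.length, R, hR, ?_⟩
    have h2 : (t ++ [R t.length]).length = t.length + 1 := by simp
    rw [h2, runPrefix_succ, ht]

theorem pref_subset {T : Set (List M)} {S : Set (ℕ → M)} (h : S ⊆ Runs T) :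
    pref S ⊆ T := by
  rintro t ⟨R, hR, ht⟩
  rw [← ht]
  exact h hR t.length

theorem subset_runs_pref (S : Set (ℕ → M)) : S ⊆ Runs (pref S) :=
  fun R hR n => runPrefix_mem_pref hR n

theorem runs_pref {S : Set (ℕ → M)} (hfin : S.Finite) : Runs (pref S) = S := by
  apply Set.Subset.antisymm _ (subset_runs_pref S)
  intro R hR
  have h : ∀ n : ℕ, ∃ R' : (ℕ → M), R' ∈ S ∧ runPrefix R' n = runPrefix R n := by
    intro n
    obtain ⟨R', hR', h'⟩ := hR n
    rw [runPrefix_length] at h'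
    exact ⟨R', hR', h'⟩
  choose ψ hψS hψ using h
  have : Finite ↥S := hfin
  obtain ⟨y, hy⟩ := Finite.exists_infinite_fiber (fun n => (⟨ψ n, hψS n⟩ : ↥S))
  have hy' : Set.Infinite ((fun n => (⟨ψ n, hψS n⟩ : ↥S)) ⁻¹' {y}) :=
    Set.infinite_coe_iff.mp hy
  have key : (y : ℕ → M) = R := by
    apply runPrefix_inj
    intro n
    obtain ⟨m, hm, hnm⟩ := hy'.exists_gt n
    have hym : ψ m = (y : ℕ → M) := congrArg Subtype.val hm
    have := hψ m
    rw [hym] at this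
    have h1 := congrArg (fun l => l.take n) this
    simpa [runPrefix_take_of_le _ (le_of_lt hnm)] using h1
  rw [← key]; exact y.2

/-- The finite subgame of `G` determined by a set of runs `S`. -/
def finSub (G : Game M) (S : Set (ℕ → M)) : Game M where
  tree := pref S
  isGameTree := pref_isGameTree S
  payoff := G.payoff ∩ S
  payoff_subset := fun R hR => subset_runs_pref S hR.2

theorem finSub_isFin (G : Game M) {S : Set (ℕ → M)} (hfin : S.Finite) :
    (finSub G S).IsFin := by
  show (Runs (pref S)).Finite
  rw [runs_pref hfin]; exact hfin

/-- The inclusion of a finite subgame is a game embedding. -/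
theorem finSub_incl (G : Game M) {S : Set (ℕ → M)} (hS : S ⊆ Runs G.tree)
    (hfin : S.Finite) : IsGameEmbedding (finSub G S) G (fun t => t) := by
  refine ⟨⟨fun t ht => pref_subset hS ht, fun t _ => rfl, fun t _ k => rfl⟩,
    fun t _ s _ h => h, ?_⟩
  intro R hR S' hS'
  have hRS : R ∈ S := by rw [← runs_pref hfin]; exact hR
  have heq : S' = R := runPrefix_inj (fun n => hS' n)
  rw [heq]
  show R ∈ G.payoff ∩ S ↔ R ∈ G.payoff
  exact ⟨fun h => h.1, fun h => ⟨h, hRS⟩⟩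

theorem emb_congr {H H' : Game M₁} {G : Game M₂} {f : List M₁ → List M₂}
    (h1 : H.tree = H'.tree) (h2 : H.payoff = H'.payoff)
    (h : IsGameEmbedding H G f) : IsGameEmbedding H' G f := by
  unfold IsGameEmbedding Chronological at *
  rw [← h1, ← h2]
  exact h

theorem emb_comp {H₁ : Game M₁} {H₂ : Game M₂} {H₃ : Game M₃}
    {f : List M₁ → List M₂} {g : List M₂ → List M₃}
    (hf : IsGameEmbedding H₁ H₂ f) (hg : IsGameEmbedding H₂ H₃ g) :
    IsGameEmbedding H₁ H₃ (fun t => g (f t)) := by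
  obtain ⟨⟨fm, fl, ft⟩, fi, fp⟩ := hf
  obtain ⟨⟨gm, gl, gt⟩, gi, gp⟩ := hg
  refine ⟨⟨fun t ht => gm _ (fm t ht), fun t ht => (gl _ (fm t ht)).trans (fl t ht),
    fun t ht k => ?_⟩, fun t ht s hs h => fi t ht s hs (gi _ (fm t ht) _ (fm s hs) h), ?_⟩
  · show g (f (List.take k t)) = List.take k (g (f t))
    rw [ft t ht k, gt _ (fm t ht) k]
  · intro R hR U hU
    have hM₂ : Nonempty M₂ := by
      have h1 : f (runPrefix R 1) ∈ H₂.tree := fm _ (hR 1)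
      have h2 : (f (runPrefix R 1)).length = 1 := by rw [fl _ (hR 1), runPrefix_length]
      have : f (runPrefix R 1) ≠ [] := by
        intro h; rw [h] at h2; simp at h2
      exact ⟨(f (runPrefix R 1)).head this⟩
    obtain ⟨j⟩ := hM₂
    set S := barRun j f R with hS
    have hfR : BarMapsTo f R S := barMapsTo_barRun ⟨fm, fl, ft⟩ hR j
    have hSruns : S ∈ Runs H₂.tree := barMapsTo_runs ⟨fm, fl, ft⟩ hR hfR
    have hgS : BarMapsTo g S U := by
      intro n
      rw [hU n, hfR n]
    exact (fp R hR S hfR).trans (gp S hSruns U hgS)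

/-- Inverse of a game isomorphism. -/
theorem iso_inverse {G₁ : Game M₁} {G₂ : Game M₂} {c : List M₁ → List M₂}
    (h : IsGameIso G₁ G₂ c) :
    ∃ d : List M₂ → List M₁, IsGameIso G₂ G₁ d ∧ (∀ t ∈ G₁.tree, d (c t) = t) ∧
      ∀ s ∈ G₂.tree, c (d s) = s := by
  classical
  obtain ⟨⟨⟨cm, cl, ct⟩, ci, cp⟩, csurj⟩ := h
  set d : List M₂ → List M₁ := fun s =>
    if h : ∃ t ∈ G₁.tree, c t = s then Classical.choose h else [] with hd
  have hdc : ∀ t ∈ G₁.tree, d (c t) = t := by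
    intro t ht
    have hex : ∃ t' ∈ G₁.tree, c t' = c t := ⟨t, ht, rfl⟩
    rw [hd]; simp only [hex, dif_pos]
    obtain ⟨h1, h2⟩ := Classical.choose_spec hex
    exact ci _ h1 _ ht h2
  have hcd : ∀ s ∈ G₂.tree, c (d s) = s := by
    intro s hs
    obtain ⟨t, ht, hts⟩ := csurj s hs
    rw [← hts, hdc t ht]
  have hdm : ∀ s ∈ G₂.tree, d s ∈ G₁.tree := by
    intro s hs
    obtain ⟨t, ht, hts⟩ := csurj s hs
    rw [← hts, hdc t ht]; exact ht
  refine ⟨d, ⟨⟨⟨hdm, ?_, ?_⟩, ?_, ?_⟩, ?_⟩, hdc, hcd⟩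
  · intro s hs
    obtain ⟨t, ht, hts⟩ := csurj s hs
    rw [← hts, hdc t ht, cl t ht]
  · intro s hs k
    obtain ⟨t, ht, hts⟩ := csurj s hs
    have h1 : s.take k = c (t.take k) := by rw [← hts, ct t ht k]
    calc d (s.take k) = d (c (t.take k)) := by rw [h1]
      _ = t.take k := hdc _ (G₁.isGameTree.1 t ht k)
      _ = (d s).take k := by rw [← hts, hdc t ht]
  · intro s hs s' hs' h
    rw [← hcd s hs, ← hcd s' hs', h]
  · intro S hS R hR
    have hRruns : R ∈ Runs G₁.tree := by
      intro n
      rw [hR n]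
      exact hdm _ (hS n)
    have hcR : BarMapsTo c R S := by
      intro n
      rw [hR n, hcd _ (hS n)]
    exact (cp R hRruns S hcR).symm
  · intro t ht
    exact ⟨c t, cm t ht, hdc t ht⟩

/-- Lifting a run of the image tree along an injective chronological map. -/
theorem runs_lift {T₁ : Set (List M₁)} (f : List M₁ → List M₂)
    (hpre : ∀ t ∈ T₁, ∀ k : ℕ, t.take k ∈ T₁)
    (hlen : ∀ t ∈ T₁, (f t).length = t.length)
    (htake : ∀ t ∈ T₁, ∀ k : ℕ, f (t.take k) = (f t).take k)
    (hinj : ∀ t ∈ T₁, ∀ s ∈ T₁, f t = f s → t = s)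
    {S : ℕ → M₂} (h : ∀ n : ℕ, ∃ t ∈ T₁, f t = runPrefix S n) :
    ∃ R ∈ Runs T₁, BarMapsTo f R S := by
  choose ψ hψT hψf using h
  have hψlen : ∀ n, (ψ n).length = n := by
    intro n
    have := hlen _ (hψT n)
    rw [hψf n, runPrefix_length] at this
    omega
  have hcoh : ∀ k n, k ≤ n → (ψ n).take k = ψ k := by
    intro k n hkn
    apply hinj _ (hpre _ (hψT n) k) _ (hψT k)
    rw [htake _ (hψT n) k, hψf n, hψf k, runPrefix_take_of_le _ hkn]
  -- junk element
  have hne : ψ 1 ≠ [] := by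
    intro h; have := hψlen 1; rw [h] at this; simp at this
  set j := (ψ 1).head hne with hj
  set R : ℕ → M₁ := fun k => (ψ (k + 1)).getD k j with hR
  have hkey : ∀ n, runPrefix R n = ψ n := by
    intro n
    apply List.ext_getElem
    · rw [runPrefix_length, hψlen]
    intro i h1 h2
    rw [runPrefix_length] at h1
    rw [runPrefix_getElem _ h1]
    have hi1 : i < (ψ (i+1)).length := by rw [hψlen]; omega
    show (ψ (i + 1)).getD i j = _
    rw [List.getD_eq_getElem _ _ hi1]
    have hc : (ψ n).take (i+1) = ψ (i+1) := hcoh (i+1) n (by omega)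
    have : ((ψ n).take (i + 1))[i]'(by rw [hc]; exact hi1) = (ψ (i+1))[i]'hi1 := by
      congr 1
    rw [← this]
    simp [List.getElem_take]
  refine ⟨R, ?_, ?_⟩
  · intro n; rw [hkey n]; exact hψT n
  · intro n; rw [hkey n, hψf n]

/-- An embedding of a finite subgame is an isomorphism onto its image subgame. -/
theorem emb_image_iso {G₁ : Game M₁} {G₂ : Game M₂} [Nonempty M₂]
    {S : Set (ℕ → M₁)} (hS : S ⊆ Runs G₁.tree) (hfin : S.Finite)
    {g : List M₁ → List M₂} (hg : IsGameEmbedding (finSub G₁ S) G₂ g) :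
    ∃ Sg : Set (ℕ → M₂), Sg ⊆ Runs G₂.tree ∧ Sg.Finite ∧
      IsGameIso (finSub G₁ S) (finSub G₂ Sg) g ∧
      (∀ R ∈ S, ∃ S' ∈ Sg, BarMapsTo g R S') ∧
      (∀ S' ∈ Sg, ∃ R ∈ S, BarMapsTo g R S') := by
  obtain ⟨j⟩ := (inferInstance : Nonempty M₂)
  obtain ⟨⟨gm, gl, gt⟩, gi, gp⟩ := hg
  set gbar : (ℕ → M₁) → (ℕ → M₂) := fun R => barRun j g R with hgbar
  have hbar : ∀ R ∈ S, BarMapsTo g R (gbar R) := fun R hR =>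
    barMapsTo_barRun ⟨gm, gl, gt⟩ (subset_runs_pref S hR) j
  set Sg := gbar '' S with hSg
  have hSgmem : ∀ R ∈ S, gbar R ∈ Sg := fun R hR => ⟨R, hR, rfl⟩
  have hSgruns : Sg ⊆ Runs G₂.tree := by
    rintro S' ⟨R, hR, rfl⟩
    exact barMapsTo_runs ⟨gm, gl, gt⟩ (subset_runs_pref S hR) (hbar R hR)
  refine ⟨Sg, hSgruns, hfin.image _, ⟨⟨⟨?_, gl, gt⟩, gi, ?_⟩, ?_⟩,
    fun R hR => ⟨gbar R, hSgmem R hR, hbar R hR⟩, ?_⟩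
  · -- maps into pref Sg
    rintro t ⟨R, hR, ht⟩
    have heq : g t = runPrefix (gbar R) t.length := by
      conv_lhs => rw [← ht]
      exact (hbar R hR t.length).symm
    show g t ∈ pref Sg
    rw [heq]
    exact runPrefix_mem_pref (hSgmem R hR) t.length
  · -- payoff clause
    intro R hR S' hS'
    have hRS : R ∈ S := by rw [← runs_pref hfin]; exact hR
    have hSeq : S' = gbar R := barMapsTo_unique hS' (hbar R hRS)
    have h1 : R ∈ G₁.payoff ∩ S ↔ S' ∈ G₂.payoff := gp R hR S' hS'
    show R ∈ G₁.payoff ∩ S ↔ S' ∈ G₂.payoff ∩ Sg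
    constructor
    · intro h2
      exact ⟨h1.mp h2, by rw [hSeq]; exact hSgmem R hRS⟩
    · intro h2
      exact h1.mpr h2.1
  · -- surjectivity onto pref Sg
    rintro s ⟨S', hS', hs⟩
    obtain ⟨R, hR, rfl⟩ := hS'
    refine ⟨runPrefix R s.length, runPrefix_mem_pref hR s.length, ?_⟩
    rw [← hbar R hR s.length, hs]
  · rintro S' ⟨R, hR, rfl⟩
    exact ⟨R, hR, hbar R hR⟩

theorem tree_countable_of_fin (H : Game M) (h : H.IsFin) : H.tree.Countable := by
  have h2 : (⋃ R ∈ Runs H.tree, Set.range (runPrefix R)).Countable :=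
    Set.Countable.biUnion h.countable (fun R _ => Set.countable_range (runPrefix R))
  refine Set.Countable.mono ?_ h2
  intro t ht
  obtain ⟨R, hR, hp⟩ := exists_run H.isGameTree ht
  exact Set.mem_biUnion hR ⟨t.length, hp⟩

theorem map_inj_on {φ : M₁ → M₂} {A : Set M₁}
    (h : ∀ a ∈ A, ∀ b ∈ A, φ a = φ b → a = b) :
    ∀ t s : List M₁, (∀ a ∈ t, a ∈ A) → (∀ a ∈ s, a ∈ A) → t.map φ = s.map φ → t = s := by
  intro t
  induction t with
  | nil => intro s _ _ hm; cases s with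
    | nil => rfl
    | cons b s => simp at hm
  | cons a t ih =>
    intro s hta hsa hm
    cases s with
    | nil => simp at hm
    | cons b s =>
      simp only [List.map_cons, List.cons.injEq] at hm
      have h1 : a = b := h a (hta a (by simp)) b (hsa b (by simp)) hm.1
      have h2 : t = s := ih s (fun x hx => hta x (by simp [hx]))
        (fun x hx => hsa x (by simp [hx])) hm.2
      rw [h1, h2]

/-- Any game with countable tree is isomorphic to a game over `ULift ℕ` in any universe. -/
theorem exists_code {M : Type u} (H : Game M) (hc : H.tree.Countable) :
    ∃ (HH : Game (ULift.{u'} ℕ)) (c : List M → List (ULift.{u'} ℕ)),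
      IsGameIso H HH c ∧ (H.IsFin → HH.IsFin) := by
  classical
  set Mv : Set M := {a : M | ∃ t ∈ H.tree, a ∈ t} with hMv
  have hMvc : Mv.Countable := by
    apply Set.Countable.mono _ (Set.Countable.biUnion hc (fun t (_ : t ∈ H.tree) =>
      t.finite_toSet.countable))
    rintro a ⟨t, ht, hat⟩
    exact Set.mem_biUnion ht hat
  obtain ⟨ι₀, hι₀⟩ := Set.countable_iff_exists_injective.mp hMvc
  set ι : M → ULift.{u'} ℕ := fun a => if h : a ∈ Mv then ⟨ι₀ ⟨a, h⟩⟩ else ⟨0⟩ with hι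
  have hιinj : ∀ a ∈ Mv, ∀ b ∈ Mv, ι a = ι b → a = b := by
    intro a ha b hb hab
    rw [hι] at hab
    simp only [ha, hb, dif_pos] at hab
    have : ι₀ ⟨a, ha⟩ = ι₀ ⟨b, hb⟩ := congrArg ULift.down hab
    exact congrArg Subtype.val (hι₀ this)
  set c : List M → List (ULift.{u'} ℕ) := fun t => t.map ι with hcdef
  have hmem : ∀ t ∈ H.tree, ∀ a ∈ t, a ∈ Mv := fun t ht a hat => ⟨t, ht, hat⟩
  have hcinj : ∀ t ∈ H.tree, ∀ s ∈ H.tree, c t = c s → t = s := by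
    intro t ht s hs h
    exact map_inj_on hιinj t s (hmem t ht) (hmem s hs) h
  have hctake : ∀ (t : List M) (k : ℕ), c (t.take k) = (c t).take k := by
    intro t k; simp [hcdef, List.map_take]
  have hclen : ∀ t : List M, (c t).length = t.length := by
    intro t; simp [hcdef]
  have hbar : ∀ R : ℕ → M, BarMapsTo c R (fun n => ι (R n)) := by
    intro R n
    rw [runPrefix_map]
  set HH : Game (ULift.{u'} ℕ) := {
    tree := c '' H.tree
    isGameTree := by
      constructor
      · rintro s ⟨t, ht, rfl⟩ k
        exact ⟨t.take k, H.isGameTree.1 t ht k, hctake t k⟩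
      · rintro s ⟨t, ht, rfl⟩
        obtain ⟨x, hx⟩ := H.isGameTree.2 t ht
        exact ⟨ι x, t ++ [x], hx, by simp [hcdef]⟩
    payoff := (fun R => fun n => ι (R n)) '' H.payoff
    payoff_subset := by
      rintro S ⟨R, hR, rfl⟩ n
      exact ⟨runPrefix R n, H.payoff_subset hR n, (hbar R n).symm⟩ } with hHH
  have hchron : Chronological H.tree HH.tree c :=
    ⟨fun t ht => ⟨t, ht, rfl⟩, fun t _ => hclen t, fun t _ k => hctake t k⟩
  have hciso : IsGameIso H HH c := by
    refine ⟨⟨hchron, hcinj, ?_⟩, ?_⟩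
    · intro R hR S hS
      have hSeq : S = fun n => ι (R n) := barMapsTo_unique hS (hbar R)
      constructor
      · intro h
        rw [hSeq]
        exact ⟨R, h, rfl⟩
      · rintro h
        rw [hSeq] at h
        obtain ⟨R', hR', hReq⟩ := h
        have hReq' : (fun n => ι (R' n)) = (fun n => ι (R n)) := hReq
        have : R = R' := by
          apply runPrefix_inj
          intro n
          apply hcinj _ (hR n) _ (H.payoff_subset hR' n)
          show (runPrefix R n).map ι = (runPrefix R' n).map ι
          rw [← runPrefix_map, ← runPrefix_map, hReq']
        rw [this]; exact hR'
    · rintro s ⟨t, ht, rfl⟩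
      exact ⟨t, ht, rfl⟩
  refine ⟨HH, c, hciso, ?_⟩
  intro hfin
  have hsub : Runs HH.tree ⊆ (fun R => fun n => ι (R n)) '' Runs H.tree := by
    intro S hS
    obtain ⟨R, hR, hRS⟩ := runs_lift c H.isGameTree.1 (fun t _ => hclen t)
      (fun t _ k => hctake t k) hcinj (fun n => hS n)
    have : S = fun n => ι (R n) := barMapsTo_unique hRS (hbar R)
    exact ⟨R, hR, this.symm⟩
  exact Set.Finite.subset (hfin.image _) hsub

/-- Universe transfer for injectivity w.r.t. finite-game embeddings. -/
theorem transfer {N : Type w} (G : Game N) (h : InjWrtFinGameEmb.{x, y, w} G) :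
    InjWrtFinGameEmb.{u', v', w} G := by
  intro M M' H H' hH hH' e he f hf
  obtain ⟨HH, c, hc, hcfin⟩ := exists_code.{_, x} H (tree_countable_of_fin H hH)
  obtain ⟨HH', c', hc', hcfin'⟩ := exists_code.{_, y} H' (tree_countable_of_fin H' hH')
  obtain ⟨d, hd_iso, hdc, hcd⟩ := iso_inverse hc
  have hehat : IsGameEmbedding HH HH' (fun t => c' (e (d t))) :=
    emb_comp (emb_comp hd_iso.1 he) hc'.1
  have hfhat : IsGameEmbedding HH G (fun t => f (d t)) := emb_comp hd_iso.1 hf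
  obtain ⟨gh, hgh, hghe⟩ := h _ _ HH HH' (hcfin hH) (hcfin' hH') _ hehat _ hfhat
  refine ⟨fun s => gh (c' s), emb_comp hc'.1 hgh, ?_⟩
  intro t ht
  have h1 := hghe (c t) (hc.1.1.1 t ht)
  rw [hdc t ht] at h1
  exact h1

theorem forward {G₁ : Game M₁} {G₂ : Game M₂}
    (hinj₂ : InjWrtFinGameEmb.{u, u, v} G₂)
    {S : Set (ℕ → M₁)} (hS : S ⊆ Runs G₁.tree) (hfin : S.Finite)
    {g : List M₁ → List M₂} (hg : IsGameEmbedding (finSub G₁ S) G₂ g)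
    {R₁ : ℕ → M₁} (hR₁ : R₁ ∈ Runs G₁.tree) :
    ∃ g', IsGameEmbedding (finSub G₁ (insert R₁ S)) G₂ g' ∧ ∀ t ∈ pref S, g' t = g t := by
  have hfin' : (insert R₁ S).Finite := hfin.insert R₁
  have he : IsGameEmbedding (finSub G₁ S) (finSub G₁ (insert R₁ S)) (fun t => t) := by
    refine ⟨⟨fun t ht => pref_mono (Set.subset_insert R₁ S) ht, fun t _ => rfl,
      fun t _ k => rfl⟩, fun t _ s _ h => h, ?_⟩
    intro R hR S'' hS''
    have hRS : R ∈ S := by rw [← runs_pref hfin]; exact hR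
    have heq : S'' = R := runPrefix_inj (fun n => hS'' n)
    rw [heq]
    show R ∈ G₁.payoff ∩ S ↔ R ∈ G₁.payoff ∩ insert R₁ S
    exact ⟨fun h => ⟨h.1, Set.mem_insert_of_mem _ h.2⟩, fun h => ⟨h.1, hRS⟩⟩
  obtain ⟨g', hg', hext⟩ := hinj₂ M₁ M₁ (finSub G₁ S) (finSub G₁ (insert R₁ S))
    (finSub_isFin G₁ hfin) (finSub_isFin G₁ hfin') _ he g hg
  exact ⟨g', hg', fun t ht => hext t ht⟩

theorem backward {G₁ : Game M₁} {G₂ : Game M₂} [Nonempty M₁] [Nonempty M₂]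
    (hinj₁ : InjWrtFinGameEmb.{v, v, u} G₁)
    {S : Set (ℕ → M₁)} (hS : S ⊆ Runs G₁.tree) (hfin : S.Finite)
    {g : List M₁ → List M₂} (hg : IsGameEmbedding (finSub G₁ S) G₂ g)
    {R₂ : ℕ → M₂} (hR₂ : R₂ ∈ Runs G₂.tree) :
    ∃ (S' : Set (ℕ → M₁)) (g' : List M₁ → List M₂),
      S' ⊆ Runs G₁.tree ∧ S'.Finite ∧ S ⊆ S' ∧
      IsGameEmbedding (finSub G₁ S') G₂ g' ∧ (∀ t ∈ pref S, g' t = g t) ∧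
      ∃ R' ∈ S', BarMapsTo g' R' R₂ := by
  obtain ⟨Sg, hSgruns, hSgfin, hgiso, hfwd, hbwd⟩ := emb_image_iso hS hfin hg
  obtain ⟨h, hhiso, hhg, hgh⟩ := iso_inverse hgiso
  have hh : IsGameEmbedding (finSub G₂ Sg) G₁ h := by
    have h2 := emb_comp hhiso.1 (finSub_incl G₁ hS hfin)
    exact h2
  obtain ⟨h', hh', hh'ext⟩ := forward hinj₁ hSgruns hSgfin hh hR₂
  have hins : insert R₂ Sg ⊆ Runs G₂.tree := Set.insert_subset hR₂ hSgruns
  have hinsfin : (insert R₂ Sg).Finite := hSgfin.insert R₂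
  obtain ⟨S', hS'runs, hS'fin, hh'iso, hfwd', hbwd'⟩ := emb_image_iso hins hinsfin hh'
  obtain ⟨g', hg'iso, hg'h', hh'g'⟩ := iso_inverse hh'iso
  have hg'emb : IsGameEmbedding (finSub G₁ S') G₂ g' := by
    have h2 := emb_comp hg'iso.1 (finSub_incl G₂ hins hinsfin)
    exact h2
  have hSsub : S ⊆ S' := by
    intro R hR
    obtain ⟨Q, hQ, hQbm⟩ := hfwd R hR
    have hQins : Q ∈ insert R₂ Sg := Set.mem_insert_of_mem _ hQ
    obtain ⟨R'', hR''S', hR''bm⟩ := hfwd' Q hQins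
    have hbm2 : BarMapsTo h' Q R := by
      intro n
      have h1 : runPrefix Q n ∈ pref Sg := runPrefix_mem_pref hQ n
      rw [hh'ext _ h1, hQbm n, hhg _ (runPrefix_mem_pref hR n)]
    have : R'' = R := barMapsTo_unique hR''bm hbm2
    rw [← this]; exact hR''S'
  refine ⟨S', g', hS'runs, hS'fin, hSsub, hg'emb, ?_, ?_⟩
  · intro t ht
    have h1 : g t ∈ pref Sg := hgiso.1.1.1 t ht
    have h2 : g t ∈ pref (insert R₂ Sg) := pref_mono (Set.subset_insert R₂ Sg) h1
    have h3 : h' (g t) = t := by rw [hh'ext _ h1, hhg t ht]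
    have h4 := hg'h' (g t) h2
    rw [h3] at h4
    exact h4
  · obtain ⟨R', hR'S', hR'bm⟩ := hfwd' R₂ (Set.mem_insert R₂ Sg)
    refine ⟨R', hR'S', ?_⟩
    intro n
    rw [hR'bm n]
    exact (hg'h' _ (runPrefix_mem_pref (Set.mem_insert R₂ Sg) n)).symm

/-- A partial-embedding state for the back-and-forth argument. -/
def St {M₁ : Type u} {M₂ : Type v} (G₁ : Game M₁) (G₂ : Game M₂) :=
  {p : Set (ℕ → M₁) × (List M₁ → List M₂) //
    p.1 ⊆ Runs G₁.tree ∧ p.1.Finite ∧ IsGameEmbedding (finSub G₁ p.1) G₂ p.2}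

theorem step {G₁ : Game M₁} {G₂ : Game M₂} [Nonempty M₁] [Nonempty M₂]
    (hinj₁ : InjWrtFinGameEmb.{v, v, u} G₁) (hinj₂ : InjWrtFinGameEmb.{u, u, v} G₂)
    (p : St G₁ G₂) {R₁ : ℕ → M₁} (hR₁ : R₁ ∈ Runs G₁.tree)
    {R₂ : ℕ → M₂} (hR₂ : R₂ ∈ Runs G₂.tree) :
    ∃ q : St G₁ G₂, p.1.1 ⊆ q.1.1 ∧ (∀ t ∈ pref p.1.1, q.1.2 t = p.1.2 t) ∧
      R₁ ∈ q.1.1 ∧ ∃ R' ∈ q.1.1, BarMapsTo q.1.2 R' R₂ := by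
  obtain ⟨⟨S, g⟩, hS, hfin, hg⟩ := p
  obtain ⟨g', hg', hg'ext⟩ := forward hinj₂ hS hfin hg hR₁
  obtain ⟨S'', g'', hS'', hfin'', hsub, hg'', hg''ext, R', hR', hbm⟩ :=
    backward hinj₁ (Set.insert_subset hR₁ hS) (hfin.insert R₁) hg' hR₂
  refine ⟨⟨⟨S'', g''⟩, hS'', hfin'', hg''⟩, ?_, ?_, ?_, ⟨R', hR', hbm⟩⟩
  · exact (Set.subset_insert R₁ S).trans hsub
  · intro t ht
    show g'' t = g t
    rw [hg''ext t (pref_mono (Set.subset_insert R₁ S) ht), hg'ext t ht]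
  · exact hsub (Set.mem_insert R₁ S)

theorem emb_from_empty (G : Game M₁) (G' : Game M₂) (f : List M₁ → List M₂) :
    IsGameEmbedding (finSub G (∅ : Set (ℕ → M₁))) G' f := by
  have hpe : pref (∅ : Set (ℕ → M₁)) = ∅ := by
    ext t; simp [pref]
  have ht : ∀ t : List M₁, t ∈ (finSub G (∅ : Set (ℕ → M₁))).tree → False := by
    intro t h
    rw [show (finSub G (∅ : Set (ℕ → M₁))).tree = pref ∅ from rfl, hpe] at h
    exact h
  have hr : ∀ R : ℕ → M₁, R ∈ Runs (finSub G (∅ : Set (ℕ → M₁))).tree → False :=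
    fun R hR => ht _ (hR 0)
  exact ⟨⟨fun t h => absurd h (ht t), fun t h => absurd h (ht t), fun t h => absurd h (ht t)⟩,
    fun t h => absurd h (ht t), fun R h => absurd h (hr R)⟩

theorem exists_enum {T : Set (List M)} (hT : IsGameTree T) (hTc : T.Countable)
    (hne : T.Nonempty) {A : Set (ℕ → M)} (hA : A ⊆ Runs T) (hAc : A.Countable) :
    ∃ ρ : ℕ → (ℕ → M), (∀ n, ρ n ∈ Runs T) ∧
      (∀ t ∈ T, ∃ n, runPrefix (ρ n) t.length = t) ∧ (∀ R ∈ A, ∃ n, ρ n = R) := by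
  obtain ⟨eT, heT⟩ := Set.Countable.exists_eq_range hTc hne
  have heTmem : ∀ n, eT n ∈ T := fun n => heT ▸ Set.mem_range_self n
  have hext : ∀ n, ∃ R ∈ Runs T, runPrefix R (eT n).length = eT n := fun n =>
    exists_run hT (heTmem n)
  choose rT hrT hrTpre using hext
  have hAenum : ∃ a : ℕ → (ℕ → M), (∀ n, a n ∈ Runs T) ∧ ∀ R ∈ A, ∃ n, a n = R := by
    rcases A.eq_empty_or_nonempty with hAe | hAne
    · refine ⟨fun _ => rT 0, fun _ => hrT 0, ?_⟩
      rw [hAe]; rintro R hR; exact absurd hR (Set.notMem_empty R)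
    · obtain ⟨eA, heA⟩ := Set.Countable.exists_eq_range hAc hAne
      refine ⟨eA, fun n => hA (heA ▸ Set.mem_range_self n), ?_⟩
      intro R hR
      rw [heA] at hR
      exact hR
  obtain ⟨a, haruns, hacov⟩ := hAenum
  refine ⟨fun n => if n % 2 = 0 then rT (n / 2) else a (n / 2), ?_, ?_, ?_⟩
  · intro n
    dsimp only
    split
    · exact hrT _
    · exact haruns _
  · intro t ht
    rw [heT] at ht
    obtain ⟨m, hm⟩ := ht
    refine ⟨2 * m, ?_⟩
    have h1 : (2 * m) % 2 = 0 := by omega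
    have h2 : (2 * m) / 2 = m := by omega
    dsimp only
    rw [if_pos h1, h2, ← hm]
    exact hrTpre m
  · intro R hR
    obtain ⟨m, hm⟩ := hacov R hR
    refine ⟨2 * m + 1, ?_⟩
    have h1 : ¬((2 * m + 1) % 2 = 0) := by omega
    have h2 : (2 * m + 1) / 2 = m := by omega
    dsimp only
    rw [if_neg h1, h2]
    exact hm

end Auxiliary

/-- a back-and-forth between two countable games injective w.r.t.
finite-game embeddings: any embedding of a finite subgame of the first into the
second extends to an isomorphism. -/
theorem embedding_extends_to_iso {M₁ : Type u} {M₂ : Type v}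
    (G₁ : Game M₁) (G₂ : Game M₂)
    (hT₁ : G₁.tree.Countable) (hT₂ : G₂.tree.Countable)
    (hA₁ : G₁.payoff.Countable) (hA₂ : G₂.payoff.Countable)
    (hinj₁ : InjWrtFinGameEmb.{x, y, u} G₁)
    (hinj₂ : InjWrtFinGameEmb.{x, y, v} G₂)
    (G : Game M₁) (hGfin : G.IsFin) (hle : G.Sub G₁)
    (f : List M₁ → List M₂) (hf : IsGameEmbedding G G₂ f) :
    ∃ ftil : List M₁ → List M₂, IsGameIso G₁ G₂ ftil ∧
      ∀ t ∈ G.tree, ftil t = f t := by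
  classical
  have hinj₁' : InjWrtFinGameEmb.{v, v, u} G₁ := transfer G₁ hinj₁
  have hinj₂' : InjWrtFinGameEmb.{u, u, v} G₂ := transfer G₂ hinj₂
  rcases Set.eq_empty_or_nonempty G₁.tree with hT1e | hT1ne
  · -- G₁ has empty tree; show G₂ does too, and the trivial map is an iso.
    have hT2e : G₂.tree = ∅ := by
      by_contra hcon
      obtain ⟨s, hs⟩ := Set.nonempty_iff_ne_empty.mpr hcon
      obtain ⟨R, hR, -⟩ := exists_run G₂.isGameTree hs
      have hid : IsGameEmbedding (finSub G₂ (∅ : Set (ℕ → M₂))) (finSub G₂ {R})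
          (fun t => t) := emb_from_empty _ _ _
      have h0 : IsGameEmbedding (finSub G₂ (∅ : Set (ℕ → M₂))) G₁ (fun _ => []) :=
        emb_from_empty _ _ _
      obtain ⟨g, hg, -⟩ := hinj₁' M₂ M₂ _ _ (finSub_isFin _ Set.finite_empty)
        (finSub_isFin _ (Set.finite_singleton R)) _ hid _ h0
      have hmem : ([] : List M₂) ∈ (finSub G₂ ({R} : Set (ℕ → M₂))).tree :=
        ⟨R, rfl, by simp [runPrefix]⟩
      have : g [] ∈ G₁.tree := hg.1.1 _ hmem
      rw [hT1e] at this
      exact this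
    have h1f : ∀ t : List M₁, t ∈ G₁.tree → False := by
      intro t ht; rw [hT1e] at ht; exact ht
    have h2f : ∀ s : List M₂, s ∈ G₂.tree → False := by
      intro s hs; rw [hT2e] at hs; exact hs
    have hrf : ∀ R : ℕ → M₁, R ∈ Runs G₁.tree → False := fun R hR => h1f _ (hR 0)
    refine ⟨fun _ => [], ⟨⟨⟨fun t ht => absurd ht (h1f t), fun t ht => absurd ht (h1f t),
      fun t ht => absurd ht (h1f t)⟩, fun t ht => absurd ht (h1f t),
      fun R hR => absurd hR (hrf R)⟩, fun s hs => absurd hs (h2f s)⟩, ?_⟩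
    intro t ht
    exact absurd (hle.1 ht) (h1f t)
  · -- main case
    have hT2ne : G₂.tree.Nonempty := by
      by_contra hcon
      obtain ⟨t0, ht0⟩ := hT1ne
      obtain ⟨R, hR, -⟩ := exists_run G₁.isGameTree ht0
      have hid : IsGameEmbedding (finSub G₁ (∅ : Set (ℕ → M₁))) (finSub G₁ {R})
          (fun t => t) := emb_from_empty _ _ _
      have h0 : IsGameEmbedding (finSub G₁ (∅ : Set (ℕ → M₁))) G₂ (fun _ => []) :=
        emb_from_empty _ _ _
      obtain ⟨g, hg, -⟩ := hinj₂' M₁ M₁ _ _ (finSub_isFin _ Set.finite_empty)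
        (finSub_isFin _ (Set.finite_singleton R)) _ hid _ h0
      have hmem : ([] : List M₁) ∈ (finSub G₁ ({R} : Set (ℕ → M₁))).tree :=
        ⟨R, rfl, by simp [runPrefix]⟩
      have : g [] ∈ G₂.tree := hg.1.1 _ hmem
      exact hcon ⟨g [], this⟩
    -- Nonempty M₁, M₂
    have hnil1 : ([] : List M₁) ∈ G₁.tree := by
      obtain ⟨t, ht⟩ := hT1ne
      have := G₁.isGameTree.1 t ht 0
      simpa using this
    have hnil2 : ([] : List M₂) ∈ G₂.tree := by
      obtain ⟨t, ht⟩ := hT2ne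
      have := G₂.isGameTree.1 t ht 0
      simpa using this
    obtain ⟨x1, -⟩ := G₁.isGameTree.2 [] hnil1
    obtain ⟨x2, -⟩ := G₂.isGameTree.2 [] hnil2
    haveI : Nonempty M₁ := ⟨x1⟩
    haveI : Nonempty M₂ := ⟨x2⟩
    -- enumerations
    obtain ⟨ρ₁, hρ₁runs, hρ₁cov, hρ₁A⟩ :=
      exists_enum G₁.isGameTree hT₁ hT1ne G₁.payoff_subset hA₁
    obtain ⟨ρ₂, hρ₂runs, hρ₂cov, hρ₂A⟩ :=
      exists_enum G₂.isGameTree hT₂ hT2ne G₂.payoff_subset hA₂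
    -- initial state
    have hS₀ : Runs G.tree ⊆ Runs G₁.tree := fun R hR n => hle.1 (hR n)
    have hGtree : G.tree = pref (Runs G.tree) := by
      apply Set.Subset.antisymm
      · intro t ht
        obtain ⟨R, hR, hp⟩ := exists_run G.isGameTree ht
        exact ⟨R, hR, hp⟩
      · exact pref_subset (fun R hR => hR)
    have hg₀ : IsGameEmbedding (finSub G₁ (Runs G.tree)) G₂ f := by
      refine emb_congr (H := G) ?_ ?_ hf
      · exact hGtree
      · exact hle.2
    let p₀ : St G₁ G₂ := ⟨⟨Runs G.tree, f⟩, hS₀, hGfin, hg₀⟩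
    let F : ℕ → St G₁ G₂ → St G₁ G₂ := fun n p =>
      Classical.choose (step hinj₁' hinj₂' p (hρ₁runs n) (hρ₂runs n))
    let ch : ℕ → St G₁ G₂ := fun n => Nat.rec p₀ F n
    have hspec : ∀ n, (ch n).1.1 ⊆ (ch (n+1)).1.1 ∧
        (∀ t ∈ pref (ch n).1.1, (ch (n+1)).1.2 t = (ch n).1.2 t) ∧
        ρ₁ n ∈ (ch (n+1)).1.1 ∧
        ∃ R' ∈ (ch (n+1)).1.1, BarMapsTo (ch (n+1)).1.2 R' (ρ₂ n) := by
      intro n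
      exact Classical.choose_spec (step hinj₁' hinj₂' (ch n) (hρ₁runs n) (hρ₂runs n))
    have hmono : ∀ m n, m ≤ n → (ch m).1.1 ⊆ (ch n).1.1 := by
      intro m n hmn
      induction n, hmn using Nat.le_induction with
      | base => exact subset_rfl
      | succ n hmn ih => exact ih.trans (hspec n).1
    have hagree : ∀ m n, m ≤ n → ∀ t ∈ pref (ch m).1.1, (ch n).1.2 t = (ch m).1.2 t := by
      intro m n hmn
      induction n, hmn using Nat.le_induction with
      | base => intro t ht; rfl
      | succ n hmn ih =>
        intro t ht
        rw [(hspec n).2.1 t (pref_mono (hmono m n hmn) ht), ih t ht]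
    set ftil : List M₁ → List M₂ := fun t =>
      if h : ∃ n, t ∈ pref (ch n).1.1 then (ch (Nat.find h)).1.2 t else [] with hftil
    have hcov : ∀ t ∈ G₁.tree, ∃ n, t ∈ pref (ch n).1.1 := by
      intro t ht
      obtain ⟨k, hk⟩ := hρ₁cov t ht
      exact ⟨k + 1, ⟨ρ₁ k, (hspec k).2.2.1, hk⟩⟩
    have hcoh : ∀ n, ∀ t ∈ pref (ch n).1.1, ftil t = (ch n).1.2 t := by
      intro n t ht
      have hex : ∃ m, t ∈ pref (ch m).1.1 := ⟨n, ht⟩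
      have h0 : ftil t = (ch (Nat.find hex)).1.2 t := by
        rw [hftil]
        exact dif_pos hex
      rw [h0]
      have hmt : t ∈ pref (ch (Nat.find hex)).1.1 := Nat.find_spec hex
      have h1 : (ch (max (Nat.find hex) n)).1.2 t = (ch (Nat.find hex)).1.2 t :=
        hagree _ _ (le_max_left _ n) t hmt
      have h2 : (ch (max (Nat.find hex) n)).1.2 t = (ch n).1.2 t :=
        hagree _ _ (le_max_right _ n) t ht
      rw [← h1, h2]
    -- injectivity on the tree
    have hinjT : ∀ t ∈ G₁.tree, ∀ s ∈ G₁.tree, ftil t = ftil s → t = s := by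
      intro t ht s hs h
      obtain ⟨n, hn⟩ := hcov t ht
      obtain ⟨m, hm⟩ := hcov s hs
      have hnN := pref_mono (hmono n (max n m) (le_max_left n m)) hn
      have hmN := pref_mono (hmono m (max n m) (le_max_right n m)) hm
      rw [hcoh (max n m) t hnN, hcoh (max n m) s hmN] at h
      exact (ch (max n m)).2.2.2.2.1 t hnN s hmN h
    have hbar_stage : ∀ n R, R ∈ (ch n).1.1 → ∀ S, BarMapsTo ftil R S →
        BarMapsTo (ch n).1.2 R S := by
      intro n R hR S hS k
      rw [hS k, hcoh n _ (runPrefix_mem_pref hR k)]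
    -- chronological
    have hchron : Chronological G₁.tree G₂.tree ftil := by
      refine ⟨?_, ?_, ?_⟩
      · intro t ht
        obtain ⟨n, hn⟩ := hcov t ht
        rw [hcoh n t hn]
        exact (ch n).2.2.2.1.1 t hn
      · intro t ht
        obtain ⟨n, hn⟩ := hcov t ht
        rw [hcoh n t hn]
        exact (ch n).2.2.2.1.2.1 t hn
      · intro t ht k
        obtain ⟨n, hn⟩ := hcov t ht
        have htk : t.take k ∈ pref (ch n).1.1 := (pref_isGameTree _).1 t hn k
        rw [hcoh n t hn, hcoh n _ htk]
        exact (ch n).2.2.2.1.2.2 t hn k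
    -- payoff
    have hpay : ∀ R ∈ Runs G₁.tree, ∀ S : ℕ → M₂, BarMapsTo ftil R S →
        (R ∈ G₁.payoff ↔ S ∈ G₂.payoff) := by
      intro R hR S hS
      constructor
      · intro hRA
        obtain ⟨k, hk⟩ := hρ₁A R hRA
        have hmem : R ∈ (ch (k+1)).1.1 := by rw [← hk]; exact (hspec k).2.2.1
        have hbm : BarMapsTo (ch (k+1)).1.2 R S := hbar_stage (k+1) R hmem S hS
        have hruns : R ∈ Runs (finSub G₁ (ch (k+1)).1.1).tree := subset_runs_pref _ hmem
        exact ((ch (k+1)).2.2.2.2.2 R hruns S hbm).mp ⟨hRA, hmem⟩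
      · intro hSA
        obtain ⟨k, hk⟩ := hρ₂A S hSA
        obtain ⟨R', hR'mem, hR'bm⟩ := (hspec k).2.2.2
        have hbmf : BarMapsTo ftil R' (ρ₂ k) := by
          intro n
          rw [hR'bm n, hcoh (k+1) _ (runPrefix_mem_pref hR'mem n)]
        have hR'runs : R' ∈ Runs G₁.tree := (ch (k+1)).2.1 hR'mem
        have hReq : R = R' := by
          apply runPrefix_inj
          intro n
          apply hinjT _ (hR n) _ (hR'runs n)
          rw [← hS n, ← hbmf n, hk]
        have hbm : BarMapsTo (ch (k+1)).1.2 R S := by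
          rw [hReq, ← hk]
          exact hR'bm
        have hmemR : R ∈ (ch (k+1)).1.1 := by rw [hReq]; exact hR'mem
        have hruns : R ∈ Runs (finSub G₁ (ch (k+1)).1.1).tree := subset_runs_pref _ hmemR
        exact (((ch (k+1)).2.2.2.2.2 R hruns S hbm).mpr hSA).1
    -- surjectivity
    have hsurj : ∀ s ∈ G₂.tree, ∃ t ∈ G₁.tree, ftil t = s := by
      intro s hs
      obtain ⟨k, hk⟩ := hρ₂cov s hs
      obtain ⟨R', hR'mem, hR'bm⟩ := (hspec k).2.2.2
      refine ⟨runPrefix R' s.length, (ch (k+1)).2.1 hR'mem s.length, ?_⟩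
      rw [hcoh (k+1) _ (runPrefix_mem_pref hR'mem s.length), ← hR'bm s.length, hk]
    refine ⟨ftil, ⟨⟨hchron, hinjT, hpay⟩, hsurj⟩, ?_⟩
    intro t ht
    have ht' : t ∈ pref (ch 0).1.1 := by
      show t ∈ pref (Runs G.tree)
      rw [← hGtree]
      exact ht
    rw [hcoh 0 t ht']
    rfl

end FraisseGames
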